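/- arXiv:1109.6275 — 4 statements merged into one kernel-verified Lean document; each statement's English description precedes it below -/
import Mathlib

section
/- If a graph G contains an induced K_4 on vertices {a,b,c,d}, and G∖{a} is cyclotomic (all eigenvalues in [-2,2]), then none of b, c, d is adjacent to any vertex of G outside {a,b,c,d}. -/
open scoped Classical

open Matrix Polynomial

lemma charpoly_eval_eq' {m : ℕ} (M : Matrix (Fin m) (Fin m) ℝ) (μ : ℝ) :
    M.charpoly.eval μ = ((μ : ℝ) • (1 : Matrix (Fin m) (Fin m) ℝ) - M).det := by
  rw [Matrix.charpoly, _root_.eval_det, matPolyEquiv_charmatrix]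
  congr 1
  simp [Matrix.scalar_apply, Matrix.smul_eq_diagonal_mul]

lemma rayleigh_bound' {m : ℕ} (M : Matrix (Fin m) (Fin m) ℝ) (hM : M.IsHermitian)
    (h : ∀ x ∈ M.charpoly.roots, x ≤ 2) (v : Fin m → ℝ) :
    v ⬝ᵥ M *ᵥ v ≤ 2 * (v ⬝ᵥ v) := by
  set N : Matrix (Fin m) (Fin m) ℝ := (2 : ℝ) • (1 : Matrix (Fin m) (Fin m) ℝ) - M with hNdef
  have hN : N.IsHermitian := by
    show Nᴴ = N
    rw [hNdef]
    rw [Matrix.conjTranspose_sub, Matrix.conjTranspose_smul, Matrix.conjTranspose_one, hM]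
    norm_num
  have hpsd : N.PosSemidef := by
    apply hN.posSemidef_iff_eigenvalues_nonneg.mpr
    intro i
    show (0:ℝ) ≤ hN.eigenvalues i
    have hsp := hN.eigenvalues_mem_spectrum_real i
    set ν := hN.eigenvalues i with hν
    have hdet : ((ν : ℝ) • (1 : Matrix (Fin m) (Fin m) ℝ) - N).det = 0 := by
      by_contra hd
      apply spectrum.mem_iff.mp hsp
      rw [Matrix.isUnit_iff_isUnit_det]
      have : algebraMap ℝ (Matrix (Fin m) (Fin m) ℝ) ν - N
          = (ν : ℝ) • (1 : Matrix (Fin m) (Fin m) ℝ) - N := by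
        rw [Algebra.algebraMap_eq_smul_one]
      rw [this]
      exact isUnit_iff_ne_zero.mpr hd
    have hkey : ((2 - ν : ℝ) • (1 : Matrix (Fin m) (Fin m) ℝ) - M)
        = -((ν : ℝ) • (1 : Matrix (Fin m) (Fin m) ℝ) - N) := by
      rw [hNdef]
      module
    have hroot : (2 - ν) ∈ M.charpoly.roots := by
      rw [Polynomial.mem_roots (M.charpoly_monic.ne_zero)]
      show M.charpoly.eval (2 - ν) = 0
      rw [charpoly_eval_eq', hkey, Matrix.det_neg, hdet, mul_zero]
    have := h _ hroot
    linarith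
  have h0 := hpsd.dotProduct_mulVec_nonneg v
  have hstar : (star v : Fin m → ℝ) = v := by
    funext i; simp
  rw [hstar] at h0
  have hexp : v ⬝ᵥ N *ᵥ v = 2 * (v ⬝ᵥ v) - v ⬝ᵥ M *ᵥ v := by
    rw [hNdef, Matrix.sub_mulVec, dotProduct_sub, Matrix.smul_mulVec,
      Matrix.one_mulVec, dotProduct_smul, smul_eq_mul]
  rw [hexp] at h0
  linarith

lemma quad_aux' {m : ℕ} (M : Matrix (Fin m) (Fin m) ℝ)
    (hnn : ∀ i j, 0 ≤ M i j)
    (hray : ∀ v : Fin m → ℝ, v ⬝ᵥ M *ᵥ v ≤ 2 * (v ⬝ᵥ v))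
    (p q r s : Fin m)
    (hpq : p ≠ q) (hpr : p ≠ r) (hps : p ≠ s) (hqr : q ≠ r) (hqs : q ≠ s) (hrs : r ≠ s)
    (hMpq : M p q = 1) (hMqp : M q p = 1) (hMpr : M p r = 1) (hMrp : M r p = 1)
    (hMqr : M q r = 1) (hMrq : M r q = 1) (hMps : M p s = 1) (hMsp : M s p = 1) : False := by
  set x : Fin m → ℝ :=
    (3/2 : ℝ) • (Pi.single p 1 : Fin m → ℝ) + Pi.single q 1 + Pi.single r 1 + Pi.single s 1 with hx
  have h := hray x
  simp only [hx, add_dotProduct, smul_dotProduct, dotProduct_add,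
    dotProduct_smul, Matrix.mulVec_add, Matrix.mulVec_smul,
    Matrix.mulVec_single, single_dotProduct, dotProduct_single,
    Pi.single_apply, Pi.add_apply, Pi.smul_apply, smul_eq_mul] at h
  simp only [if_pos rfl, if_neg hpq.symm, if_neg hpq, if_neg hpr.symm, if_neg hpr,
    if_neg hps.symm, if_neg hps, if_neg hqr.symm, if_neg hqr, if_neg hqs.symm, if_neg hqs,
    if_neg hrs.symm, if_neg hrs, hMpq, hMqp, hMpr, hMrp, hMqr, hMrq, hMps, hMsp] at h
  norm_num at h
  have h1 := hnn p p
  have h2 := hnn q q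
  have h3 := hnn r r
  have h4 := hnn s s
  have h5 := hnn q s
  have h6 := hnn s q
  have h7 := hnn r s
  have h8 := hnn s r
  linarith [h]

/-- If a connected graph `G` contains an induced `K_4` on vertices `{a,b,c,d}` and
`G ∖ {a}` is cyclotomic (all adjacency eigenvalues in `[-2,2]`), then none of `b, c, d`
is adjacent to any vertex of `G` outside `{a,b,c,d}`. -/
theorem K4_outside_nonadjacent (n : ℕ) (G : SimpleGraph (Fin (n + 1)))
    (hconn : G.Connected)
    (a b c d : Fin (n + 1))
    (hab : G.Adj a b) (hac : G.Adj a c) (had : G.Adj a d)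
    (hbc : G.Adj b c) (hbd : G.Adj b d) (hcd : G.Adj c d)
    (ha : ∀ x ∈ ((G.adjMatrix ℝ).submatrix a.succAbove a.succAbove).charpoly.roots,
      -2 ≤ x ∧ x ≤ 2) :
    ∀ w : Fin (n + 1), w ≠ a → w ≠ b → w ≠ c → w ≠ d →
      ¬G.Adj b w ∧ ¬G.Adj c w ∧ ¬G.Adj d w := by
  intro w hwa hwb hwc hwd
  set f := a.succAbove with hf
  set M := (G.adjMatrix ℝ).submatrix f f with hMdef
  have hfi : Function.Injective f := Fin.succAbove_right_injective
  obtain ⟨ib, hib⟩ := Fin.exists_succAbove_eq (hab.ne.symm)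
  obtain ⟨ic, hic⟩ := Fin.exists_succAbove_eq (hac.ne.symm)
  obtain ⟨id', hid⟩ := Fin.exists_succAbove_eq (had.ne.symm)
  obtain ⟨iw, hiw⟩ := Fin.exists_succAbove_eq hwa
  have hherm : M.IsHermitian := by
    show Mᴴ = M
    ext i j
    simp only [hMdef, Matrix.conjTranspose_apply, Matrix.submatrix_apply,
      SimpleGraph.adjMatrix_apply, star_trivial]
    rw [SimpleGraph.adj_comm]
  have hray : ∀ v : Fin (n + 1 - 1) → ℝ, v ⬝ᵥ M *ᵥ v ≤ 2 * (v ⬝ᵥ v) :=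
    rayleigh_bound' M hherm (fun x hx => (ha x hx).2)
  have hnn : ∀ i j, 0 ≤ M i j := by
    intro i j
    simp only [hMdef, Matrix.submatrix_apply, SimpleGraph.adjMatrix_apply]
    split <;> norm_num
  have hne : ∀ {u v : Fin (n+1)} {iu iv : Fin (n+1-1)}, f iu = u → f iv = v → u ≠ v →
      iu ≠ iv := by
    intro u v iu iv hu hv huv h
    exact huv (by rw [← hu, ← hv, h])
  have hent : ∀ {u v : Fin (n+1)} {iu iv : Fin (n+1-1)}, f iu = u → f iv = v → G.Adj u v →
      M iu iv = 1 := by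
    intro u v iu iv hu hv huv
    simp only [hMdef, Matrix.submatrix_apply, SimpleGraph.adjMatrix_apply, hu, hv, if_pos huv]
  refine ⟨?_, ?_, ?_⟩
  · intro hadj
    exact quad_aux' M hnn hray ib ic id' iw
      (hne hib hic hbc.ne) (hne hib hid hbd.ne) (hne hib hiw (Ne.symm hwb))
      (hne hic hid hcd.ne) (hne hic hiw (Ne.symm hwc)) (hne hid hiw (Ne.symm hwd))
      (hent hib hic hbc) (hent hic hib hbc.symm) (hent hib hid hbd) (hent hid hib hbd.symm)
      (hent hic hid hcd) (hent hid hic hcd.symm) (hent hib hiw hadj) (hent hiw hib hadj.symm)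
  · intro hadj
    exact quad_aux' M hnn hray ic ib id' iw
      (hne hic hib hbc.ne.symm) (hne hic hid hcd.ne) (hne hic hiw (Ne.symm hwc))
      (hne hib hid hbd.ne) (hne hib hiw (Ne.symm hwb)) (hne hid hiw (Ne.symm hwd))
      (hent hic hib hbc.symm) (hent hib hic hbc) (hent hic hid hcd) (hent hid hic hcd.symm)
      (hent hib hid hbd) (hent hid hib hbd.symm) (hent hic hiw hadj) (hent hiw hic hadj.symm)
  · intro hadj
    exact quad_aux' M hnn hray id' ib ic iw
      (hne hid hib hbd.ne.symm) (hne hid hic hcd.ne.symm) (hne hid hiw (Ne.symm hwd))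
      (hne hib hic hbc.ne) (hne hib hiw (Ne.symm hwb)) (hne hic hiw (Ne.symm hwc))
      (hent hid hib hbd.symm) (hent hib hid hbd) (hent hid hic hcd.symm) (hent hic hid hcd)
      (hent hib hic hbc) (hent hic hib hbc.symm) (hent hid hiw hadj) (hent hiw hid hadj.symm)
end

section
/- Let G be a connected graph with λ_1(G) > 2 and λ_2(G) ≤ 2. Then the vertex set of G can be partitioned as V = M ∪ A ∪ H where: G restricted to M is minimal subject to having largest eigenvalue > 2; A consists of the vertices of V∖M adjacent to some vertex of M; and the induced subgraph on H = V∖(M∪A) has all eigenvalues in [-2,2]. -/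
open scoped Classical
open Polynomial Matrix Finset

section Herm
variable {n : Type} [Fintype n] [DecidableEq n]

lemma herm_charpoly (A : Matrix n n ℝ) (hA : A.IsHermitian) :
    A.charpoly = ∏ i, (X - C (hA.eigenvalues i)) := by
  have hofReal : (RCLike.ofReal ∘ hA.eigenvalues : n → ℝ) = hA.eigenvalues := by
    funext i; simp
  have hspec := hA.spectral_theorem
  rw [hofReal, Unitary.conjStarAlgAut_apply] at hspec
  set U : Matrix n n ℝ := (hA.eigenvectorUnitary : Matrix n n ℝ) with hU
  have hUU : U * star U = 1 := (Matrix.mem_unitaryGroup_iff).mp hA.eigenvectorUnitary.2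
  have hC : ∀ (M N : Matrix n n ℝ), (M * N).map (C : ℝ →+* ℝ[X]) = M.map C * N.map C := by
    intro M N
    exact Matrix.map_mul
  have hchar : charmatrix A = U.map (C : ℝ →+* ℝ[X]) * charmatrix (diagonal hA.eigenvalues) *
      (star U).map (C : ℝ →+* ℝ[X]) := by
    have hcentral : Commute ((scalar n) (X : ℝ[X])) (U.map (C : ℝ →+* ℝ[X])) :=
      Matrix.scalar_commute _ (fun r' => Commute.all _ _) _
    unfold charmatrix
    rw [Matrix.mul_sub, Matrix.sub_mul]
    congr 1
    · rw [← hcentral.eq, Matrix.mul_assoc, ← hC, hUU]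
      simp
    · simp only [RingHom.mapMatrix_apply]
      rw [← hC, ← hC, ← hspec]
  have hdet : A.charpoly = (charmatrix (diagonal hA.eigenvalues)).det := by
    rw [Matrix.charpoly, hchar, Matrix.det_mul, Matrix.det_mul, mul_comm, ← mul_assoc,
      ← Matrix.det_mul, ← hC]
    rw [show star U * U = 1 from (Matrix.mem_unitaryGroup_iff').mp hA.eigenvectorUnitary.2]
    simp
  rw [hdet]
  have : charmatrix (diagonal hA.eigenvalues) = diagonal fun i => (X : ℝ[X]) - C (hA.eigenvalues i) := by
    ext i j
    by_cases h : i = j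
    · subst h; simp [charmatrix_apply_eq]
    · rw [charmatrix_apply_ne _ _ _ h, Matrix.diagonal_apply_ne _ h, Matrix.diagonal_apply_ne _ h]
      simp
  rw [this, Matrix.det_diagonal]

lemma herm_roots (A : Matrix n n ℝ) (hA : A.IsHermitian) :
    A.charpoly.roots = Finset.univ.val.map hA.eigenvalues := by
  rw [herm_charpoly A hA]
  have : (∏ i, (X - C (hA.eigenvalues i))) =
      ((Finset.univ.val.map hA.eigenvalues).map fun a => X - C a).prod := by
    rw [Multiset.map_map]
    rfl
  rw [this, Polynomial.roots_multiset_prod_X_sub_C]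

end Herm

section Herm2
variable {n : Type} [Fintype n] [DecidableEq n]

lemma herm_bilin (A : Matrix n n ℝ) (hA : A.IsHermitian) (x₁ x₂ : n → ℝ) :
    x₁ ⬝ᵥ x₂ = ∑ i, (star (hA.eigenvectorUnitary : Matrix n n ℝ) *ᵥ x₁) i *
        (star (hA.eigenvectorUnitary : Matrix n n ℝ) *ᵥ x₂) i ∧
    x₁ ⬝ᵥ (A *ᵥ x₂) = ∑ i, hA.eigenvalues i *
        ((star (hA.eigenvectorUnitary : Matrix n n ℝ) *ᵥ x₁) i *
         (star (hA.eigenvectorUnitary : Matrix n n ℝ) *ᵥ x₂) i) := by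
  have hofReal : (RCLike.ofReal ∘ hA.eigenvalues : n → ℝ) = hA.eigenvalues := by
    funext i; simp
  have hspec := hA.spectral_theorem
  rw [hofReal, Unitary.conjStarAlgAut_apply] at hspec
  set U : Matrix n n ℝ := (hA.eigenvectorUnitary : Matrix n n ℝ) with hU
  have hUU : U * star U = 1 := (Matrix.mem_unitaryGroup_iff).mp hA.eigenvectorUnitary.2
  have hstar : star U = Uᵀ := Matrix.conjTranspose_eq_transpose_of_trivial U
  have hy : ∀ x : n → ℝ, star U *ᵥ x = x ᵥ* U := by
    intro x; rw [hstar, Matrix.mulVec_transpose]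
  constructor
  · have : x₁ ⬝ᵥ x₂ = x₁ ⬝ᵥ ((U * star U) *ᵥ x₂) := by rw [hUU, Matrix.one_mulVec]
    rw [this, ← Matrix.mulVec_mulVec, Matrix.dotProduct_mulVec, ← hy]
    simp [dotProduct]
  · have hAx : A *ᵥ x₂ = U *ᵥ (diagonal hA.eigenvalues *ᵥ (star U *ᵥ x₂)) := by
      conv_lhs => rw [hspec]
      rw [← Matrix.mulVec_mulVec, ← Matrix.mulVec_mulVec]
    rw [hAx, Matrix.dotProduct_mulVec, ← hy]
    simp only [dotProduct, Matrix.mulVec_diagonal]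
    exact Finset.sum_congr rfl fun i _ => by ring

end Herm2

section Herm3
variable {n : Type} [Fintype n] [DecidableEq n]

lemma exists_eigvec (A : Matrix n n ℝ) (hA : A.IsHermitian) {r : ℝ}
    (hr : r ∈ A.charpoly.roots) :
    ∃ v : n → ℝ, A *ᵥ v = r • v ∧ 0 < v ⬝ᵥ v := by
  rw [herm_roots A hA, Multiset.mem_map] at hr
  obtain ⟨i, -, hi⟩ := hr
  refine ⟨⇑(hA.eigenvectorBasis i), by rw [hA.mulVec_eigenvectorBasis, hi], ?_⟩
  have hne : ⇑(hA.eigenvectorBasis i) ≠ (0 : n → ℝ) := by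
    intro h
    exact hA.eigenvectorBasis.orthonormal.ne_zero i (by ext j; exact congrFun h j)
  obtain ⟨j, hj⟩ := Function.ne_iff.mp hne
  refine Finset.sum_pos' (fun k _ => mul_self_nonneg _) ⟨j, Finset.mem_univ j, ?_⟩
  exact mul_self_pos.mpr hj

end Herm3

section Herm4
variable {n : Type} [Fintype n] [DecidableEq n]

lemma form_le_of_roots_le {A : Matrix n n ℝ} (hA : A.IsHermitian)
    (h : ∀ x ∈ A.charpoly.roots, x ≤ 2) (v : n → ℝ) :
    v ⬝ᵥ (A *ᵥ v) ≤ 2 * (v ⬝ᵥ v) := by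
  obtain ⟨h1, h2⟩ := herm_bilin A hA v v
  rw [h1, h2, Finset.mul_sum]
  refine Finset.sum_le_sum fun i _ => ?_
  have hroot : hA.eigenvalues i ∈ A.charpoly.roots := by
    rw [herm_roots A hA]
    exact Multiset.mem_map.mpr ⟨i, Finset.mem_univ i, rfl⟩
  exact mul_le_mul_of_nonneg_right (h _ hroot) (mul_self_nonneg _)

lemma roots_le_of_form {A : Matrix n n ℝ} (hA : A.IsHermitian)
    (h : ∀ v : n → ℝ, v ⬝ᵥ (A *ᵥ v) ≤ 2 * (v ⬝ᵥ v)) :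
    ∀ x ∈ A.charpoly.roots, x ≤ 2 := by
  intro r hr
  obtain ⟨v, hv, hpos⟩ := exists_eigvec A hA hr
  have := h v
  rw [hv] at this
  have hQ : v ⬝ᵥ (r • v) = r * (v ⬝ᵥ v) := by
    simp [dotProduct, Finset.mul_sum, Finset.sum_congr, mul_assoc]
    exact Finset.sum_congr rfl fun i _ => by ring
  rw [hQ] at this
  exact le_of_mul_le_mul_right (by linarith [this]) hpos

lemma roots_neg_le_of_form {A : Matrix n n ℝ} (hA : A.IsHermitian)
    (hnn : ∀ i j, 0 ≤ A i j)
    (h : ∀ v : n → ℝ, v ⬝ᵥ (A *ᵥ v) ≤ 2 * (v ⬝ᵥ v)) :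
    ∀ x ∈ A.charpoly.roots, -2 ≤ x := by
  intro r hr
  obtain ⟨v, hv, hpos⟩ := exists_eigvec A hA hr
  set w : n → ℝ := fun i => |v i| with hw
  have hww : w ⬝ᵥ w = v ⬝ᵥ v := by
    refine Finset.sum_congr rfl fun i _ => ?_
    simp [hw, abs_mul_abs_self]
  have habs : |r| * (v ⬝ᵥ v) ≤ w ⬝ᵥ (A *ᵥ w) := by
    have h1 : |r * (v ⬝ᵥ v)| = |r| * (v ⬝ᵥ v) := by
      rw [abs_mul, abs_of_pos hpos]
    have hQ : v ⬝ᵥ (A *ᵥ v) = r * (v ⬝ᵥ v) := by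
      rw [hv]
      simp only [dotProduct, Pi.smul_apply, smul_eq_mul, Finset.mul_sum]
      exact Finset.sum_congr rfl fun i _ => by ring
    rw [← h1, ← hQ]
    calc |v ⬝ᵥ (A *ᵥ v)| ≤ ∑ i, |v i * (A *ᵥ v) i| := Finset.abs_sum_le_sum_abs _ _
    _ ≤ ∑ i, w i * (A *ᵥ w) i := by
        refine Finset.sum_le_sum fun i _ => ?_
        rw [abs_mul]
        refine mul_le_mul_of_nonneg_left ?_ (abs_nonneg _)
        calc |(A *ᵥ v) i| ≤ ∑ j, |A i j * v j| := Finset.abs_sum_le_sum_abs _ _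
        _ = (A *ᵥ w) i := by
            refine Finset.sum_congr rfl fun j _ => ?_
            rw [abs_mul, abs_of_nonneg (hnn i j)]
    _ = w ⬝ᵥ (A *ᵥ w) := rfl
  have := h w
  rw [hww] at this
  have habs2 : |r| ≤ 2 := le_of_mul_le_mul_right (by linarith) hpos
  linarith [neg_abs_le r]

end Herm4

section Herm5
variable {n : Type} [Fintype n] [DecidableEq n]

lemma key_count {A : Matrix n n ℝ} (hA : A.IsHermitian) (u w : n → ℝ)
    (hu : 2 * (u ⬝ᵥ u) < u ⬝ᵥ (A *ᵥ u)) (hw : 2 * (w ⬝ᵥ w) < w ⬝ᵥ (A *ᵥ w))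
    (huw : u ⬝ᵥ w = 0) (huAw : u ⬝ᵥ (A *ᵥ w) = 0) :
    2 ≤ ((A.charpoly.roots).filter (fun x => 2 < x)).card := by
  by_contra hcon
  push_neg at hcon
  have hcard : ((Finset.univ : Finset n).filter (fun i => 2 < hA.eigenvalues i)).card ≤ 1 := by
    have : (A.charpoly.roots).filter (fun x => 2 < x)
        = (Finset.univ.val.filter (fun i => 2 < hA.eigenvalues i)).map hA.eigenvalues := by
      rw [herm_roots A hA, Multiset.filter_map]
      rfl
    rw [this, Multiset.card_map] at hcon
    have : ((Finset.univ : Finset n).filter (fun i => 2 < hA.eigenvalues i)).card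
        = Multiset.card (Multiset.filter (fun i => 2 < hA.eigenvalues i) Finset.univ.val) := by
      rfl
    omega
  set eig := hA.eigenvalues with heig
  set p := (star (hA.eigenvectorUnitary : Matrix n n ℝ)) *ᵥ u with hp
  set q := (star (hA.eigenvectorUnitary : Matrix n n ℝ)) *ᵥ w with hq
  obtain ⟨hu1, hu2⟩ := herm_bilin A hA u u
  obtain ⟨hw1, hw2⟩ := herm_bilin A hA w w
  obtain ⟨hc1, hc2⟩ := herm_bilin A hA u w
  simp only [← hp, ← hq, ← heig] at hu1 hu2 hw1 hw2 hc1 hc2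
  rw [hu1, hu2] at hu
  rw [hw1, hw2] at hw
  rw [hc1] at huw
  rw [hc2] at huAw
  -- helper: if z vanishes where eig > 2 then sums bounded
  have hbound : ∀ z : n → ℝ, (∀ i, 2 < eig i → z i = 0) →
      ∑ i, eig i * (z i * z i) ≤ 2 * ∑ i, z i * z i := by
    intro z hz
    rw [Finset.mul_sum]
    refine Finset.sum_le_sum fun i _ => ?_
    by_cases hi : 2 < eig i
    · rw [hz i hi]; simp
    · exact mul_le_mul_of_nonneg_right (le_of_not_gt hi) (mul_self_nonneg _)
  rcases Finset.eq_empty_or_nonempty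
      ((Finset.univ : Finset n).filter (fun i => 2 < eig i)) with hemp | ⟨i₀, hi₀⟩
  · have : ∀ i, 2 < eig i → False := by
      intro i hi
      exact Finset.eq_empty_iff_forall_notMem.mp hemp i (Finset.mem_filter.mpr ⟨Finset.mem_univ i, hi⟩)
    have := hbound p (fun i hi => absurd hi (fun h => this i h))
    linarith
  · have huniq : ∀ i, 2 < eig i → i = i₀ := by
      intro i hi
      exact Finset.card_le_one.mp hcard i
        (Finset.mem_filter.mpr ⟨Finset.mem_univ i, hi⟩) i₀ hi₀
    by_cases hpz : p i₀ = 0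
    · have := hbound p (fun i hi => by rw [huniq i hi]; exact hpz)
      linarith
    · set c := q i₀ / p i₀ with hc
      set z : n → ℝ := fun i => q i - c * p i with hz
      have hz0 : ∀ i, 2 < eig i → z i = 0 := by
        intro i hi
        rw [huniq i hi]
        simp [hz, hc, div_mul_cancel₀ _ hpz]
      have hzz : ∑ i, z i * z i = (∑ i, q i * q i) + c ^ 2 * ∑ i, p i * p i := by
        have : ∀ i, z i * z i = q i * q i - 2 * c * (p i * q i) + c ^ 2 * (p i * p i) := by
          intro i; simp only [hz]; ring
        simp only [this, Finset.sum_add_distrib, Finset.sum_sub_distrib, ← Finset.mul_sum, huw]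
        ring
      have hzAz : ∑ i, eig i * (z i * z i)
          = (∑ i, eig i * (q i * q i)) + c ^ 2 * ∑ i, eig i * (p i * p i) := by
        have : ∀ i, eig i * (z i * z i) = eig i * (q i * q i)
            - 2 * c * (eig i * (p i * q i)) + c ^ 2 * (eig i * (p i * p i)) := by
          intro i; simp only [hz]; ring
        simp only [this, Finset.sum_add_distrib, Finset.sum_sub_distrib, ← Finset.mul_sum, huAw]
        ring
      have hup := hbound z hz0
      rw [hzz, hzAz] at hup
      nlinarith [sq_nonneg c]

section Graph
variable {V : Type} [Fintype V] (G : SimpleGraph V)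

lemma adj_herm (G' : SimpleGraph V) : (G'.adjMatrix ℝ).IsHermitian := by
  rw [Matrix.IsHermitian, Matrix.conjTranspose_eq_transpose_of_trivial]
  exact SimpleGraph.isSymm_adjMatrix _

lemma adj_herm' {W : Type} [Fintype W] (G' : SimpleGraph W) : (G'.adjMatrix ℝ).IsHermitian := by
  rw [Matrix.IsHermitian, Matrix.conjTranspose_eq_transpose_of_trivial]
  exact SimpleGraph.isSymm_adjMatrix _

noncomputable def ext0 (S : Set V) (y : ↥S → ℝ) : V → ℝ :=
  fun v => if h : v ∈ S then y ⟨v, h⟩ else 0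

lemma sum_ext (S : Set V) (g : V → ℝ) (hg : ∀ v, v ∉ S → g v = 0) :
    ∑ v : V, g v = ∑ v : ↥S, g ↑v := by
  rw [← Finset.sum_subset (Finset.subset_univ S.toFinset)
    (fun x _ hx => hg x (by simpa using hx))]
  exact (Finset.sum_set_coe (f := g) S).symm

lemma ext0_coe (S : Set V) (y : ↥S → ℝ) (v : ↥S) : ext0 S y ↑v = y v := by
  simp [ext0]

lemma ext0_nmem (S : Set V) (y : ↥S → ℝ) (v : V) (h : v ∉ S) : ext0 S y v = 0 := by
  simp [ext0, h]

lemma ext0_dot (S : Set V) (y z : ↥S → ℝ) : ext0 S y ⬝ᵥ ext0 S z = y ⬝ᵥ z := by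
  unfold dotProduct
  rw [sum_ext S _ (fun v hv => by rw [ext0_nmem S y v hv, zero_mul])]
  exact Finset.sum_congr rfl fun v _ => by rw [ext0_coe, ext0_coe]

lemma ext0_dot_mulVec (S : Set V) (y z : ↥S → ℝ) :
    ext0 S y ⬝ᵥ ((G.adjMatrix ℝ) *ᵥ ext0 S z) = y ⬝ᵥ ((G.induce S).adjMatrix ℝ *ᵥ z) := by
  unfold dotProduct
  rw [sum_ext S _ (fun v hv => by rw [ext0_nmem S y v hv, zero_mul])]
  refine Finset.sum_congr rfl fun v _ => ?_
  rw [ext0_coe]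
  congr 1
  unfold Matrix.mulVec dotProduct
  rw [sum_ext S _ (fun w hw => by rw [ext0_nmem S z w hw, mul_zero])]
  refine Finset.sum_congr rfl fun w _ => ?_
  rw [ext0_coe]
  by_cases h : G.Adj ↑v ↑w <;>
    simp [SimpleGraph.adjMatrix_apply, SimpleGraph.comap_adj, h]

lemma induce_univ_charpoly :
    ((G.induce (Set.univ : Set V)).adjMatrix ℝ).charpoly = (G.adjMatrix ℝ).charpoly := by
  have h : (G.induce (Set.univ : Set V)).adjMatrix ℝ
      = Matrix.reindex (Equiv.Set.univ V).symm (Equiv.Set.univ V).symm (G.adjMatrix ℝ) := by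
    ext i j
    rw [Matrix.reindex_apply, Matrix.submatrix_apply]
    simp only [Equiv.symm_symm, Equiv.Set.univ_apply]
    by_cases h : G.Adj ↑i ↑j
    · rw [SimpleGraph.adjMatrix_apply, SimpleGraph.adjMatrix_apply, if_pos, if_pos h]
      exact h
    · rw [SimpleGraph.adjMatrix_apply, SimpleGraph.adjMatrix_apply, if_neg, if_neg h]
      exact fun hc => h hc
  rw [h]
  exact Matrix.charpoly_reindex _ _

lemma induce_root_gt (S : Set V) (h : ∃ x ∈ ((G.induce S).adjMatrix ℝ).charpoly.roots, 2 < x) :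
    ∃ x : V → ℝ, 2 * (x ⬝ᵥ x) < x ⬝ᵥ ((G.adjMatrix ℝ) *ᵥ x) ∧ (∀ v, x v ≠ 0 → v ∈ S) := by
  obtain ⟨r, hr, hr2⟩ := h
  obtain ⟨y, hy, hypos⟩ := exists_eigvec _ (adj_herm' (G.induce S)) hr
  refine ⟨ext0 S y, ?_, fun v hv => by_contra fun hc => hv (ext0_nmem S y v hc)⟩
  rw [ext0_dot, ext0_dot_mulVec, (by convert hy : (G.induce S).adjMatrix ℝ *ᵥ y = r • y)]
  have : y ⬝ᵥ (r • y) = r * (y ⬝ᵥ y) := by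
    unfold dotProduct
    rw [Finset.mul_sum]
    exact Finset.sum_congr rfl fun i _ => by simp; ring
  rw [this]
  nlinarith

end Graph

def mkA {V : Type} (G : SimpleGraph V) (M : Set V) : Set V :=
  {v | v ∉ M ∧ ∃ u ∈ M, G.Adj u v}

def mkH {V : Type} (G : SimpleGraph V) (M : Set V) : Set V :=
  {v | v ∉ M ∧ v ∉ mkA G M}

lemma mem_mkA {V : Type} (G : SimpleGraph V) (M : Set V) (v : V) :
    v ∈ mkA G M ↔ v ∉ M ∧ ∃ u ∈ M, G.Adj u v := Iff.rfl

lemma mem_mkH {V : Type} (G : SimpleGraph V) (M : Set V) (v : V) :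
    v ∈ mkH G M ↔ v ∉ M ∧ v ∉ mkA G M := Iff.rfl

def PropP {V : Type} [Fintype V] (G : SimpleGraph V) (S : Set V) : Prop :=
  ∃ x ∈ ((G.induce S).adjMatrix ℝ).charpoly.roots, 2 < x

lemma PropP_congr {V : Type} [Fintype V] (G : SimpleGraph V) {S T : Set V} (h : S = T) :
    PropP G S ↔ PropP G T := by subst h; exact Iff.rfl

/-- Structure of graphs with `λ_1 > 2` and `λ_2 ≤ 2` (equivalently: exactly one
eigenvalue exceeds `2`, counted with multiplicity): the vertex set partitions as
`V = M ∪ A ∪ H` where the induced subgraph on `M` is minimal subject to having largest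
eigenvalue `> 2`, `A` is the set of vertices outside `M` adjacent to some vertex of `M`,
and the induced subgraph on `H` has all eigenvalues in `[-2,2]`. -/
theorem salem_MAH_partition {V : Type} [Fintype V] (G : SimpleGraph V)
    (hconn : G.Connected)
    (h1 : ∃ x ∈ (G.adjMatrix ℝ).charpoly.roots, 2 < x)
    (h2 : (((G.adjMatrix ℝ).charpoly.roots).filter (fun x => 2 < x)).card ≤ 1) :
    ∃ M A H : Set V,
      M ∪ A ∪ H = Set.univ ∧
      Disjoint M A ∧ Disjoint M H ∧ Disjoint A H ∧
      (∃ x ∈ ((G.induce M).adjMatrix ℝ).charpoly.roots, 2 < x) ∧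
      (∀ M' : Set V, M' ⊆ M → M' ≠ M →
        ∀ x ∈ ((G.induce M').adjMatrix ℝ).charpoly.roots, x ≤ 2) ∧
      A = {v | v ∉ M ∧ ∃ u ∈ M, G.Adj u v} ∧
      (∀ x ∈ ((G.induce H).adjMatrix ℝ).charpoly.roots, -2 ≤ x ∧ x ≤ 2) := by
  have hPuniv : PropP G (↑(Finset.univ : Finset V)) := by
    rw [PropP_congr G (Finset.coe_univ (α := V))]
    obtain ⟨x, hx, hlt⟩ := h1
    refine ⟨x, ?_, hlt⟩
    rw [← induce_univ_charpoly G] at hx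
    convert hx using 2
    congr!
  set 𝒮 : Finset (Finset V) := Finset.univ.filter
    (fun S => PropP G (↑S : Set V)) with h𝒮
  have hne : 𝒮.Nonempty :=
    ⟨Finset.univ, Finset.mem_filter.mpr ⟨Finset.mem_univ _, hPuniv⟩⟩
  obtain ⟨S₀, hS₀mem, hS₀min⟩ := Finset.exists_min_image 𝒮 Finset.card hne
  have hPM : PropP G (↑S₀ : Set V) := (Finset.mem_filter.mp hS₀mem).2
  set M : Set V := ↑S₀ with hM
  set A : Set V := mkA G M with hA
  set H : Set V := mkH G M with hH
  have hsuppH : ∀ (y : ↥H → ℝ) (w : V), ext0 H y w ≠ 0 → w ∈ H := by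
    intro y w hw
    by_contra hc
    exact hw (ext0_nmem H y w hc)
  -- minimality
  have hmin : ∀ M' : Set V, M' ⊆ M → M' ≠ M →
      ∀ x ∈ ((G.induce M').adjMatrix ℝ).charpoly.roots, x ≤ 2 := by
    intro M' hsub hneq x hx
    by_contra hlt
    push_neg at hlt
    have hPM' : PropP G (↑M'.toFinset : Set V) :=
      (PropP_congr G (Set.coe_toFinset M')).mpr ⟨x, hx, hlt⟩
    have hmem : M'.toFinset ∈ 𝒮 := Finset.mem_filter.mpr ⟨Finset.mem_univ _, hPM'⟩
    have hcard := hS₀min _ hmem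
    have hss : M'.toFinset ⊂ S₀ := by
      constructor
      · intro v hv
        have : v ∈ M' := by simpa using hv
        exact hsub this
      · intro hsup
        apply hneq
        apply Set.Subset.antisymm hsub
        intro v hv
        have : v ∈ M'.toFinset := hsup hv
        simpa using this
    have := Finset.card_lt_card hss
    omega
  -- H spectral bound
  have hHform : ∀ y : ↥H → ℝ,
      y ⬝ᵥ ((G.induce H).adjMatrix ℝ *ᵥ y) ≤ 2 * (y ⬝ᵥ y) := by
    by_contra hc
    push_neg at hc
    obtain ⟨y, hy⟩ := hc
    obtain ⟨xM, hxM, hsuppM⟩ := induce_root_gt G M hPM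
    set xH : V → ℝ := ext0 H y with hxH
    have hformH : 2 * (xH ⬝ᵥ xH) < xH ⬝ᵥ ((G.adjMatrix ℝ) *ᵥ xH) := by
      rw [hxH, ext0_dot, ext0_dot_mulVec]
      exact hy
    have hdot0 : xM ⬝ᵥ xH = 0 := by
      refine Finset.sum_eq_zero fun v _ => ?_
      by_cases hv : xM v = 0
      · rw [hv, zero_mul]
      · have hvM := hsuppM v hv
        have : xH v = 0 := ext0_nmem H y v (fun hvH => hvH.1 hvM)
        rw [this, mul_zero]
    have hcross : xM ⬝ᵥ ((G.adjMatrix ℝ) *ᵥ xH) = 0 := by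
      refine Finset.sum_eq_zero fun v _ => ?_
      by_cases hv : xM v = 0
      · rw [hv, zero_mul]
      · have hvM := hsuppM v hv
        have : (G.adjMatrix ℝ *ᵥ xH) v = 0 := by
          refine Finset.sum_eq_zero fun w _ => ?_
          by_cases hw : xH w = 0
          · rw [hw, mul_zero]
          · have hwH : w ∈ H := hsuppH y w hw
            have hnadj : ¬ G.Adj v w := by
              intro hadj
              exact hwH.2 ⟨hwH.1, v, hvM, hadj⟩
            simp [SimpleGraph.adjMatrix_apply, hnadj]
        rw [this, mul_zero]
    have hcount := key_count (adj_herm G) xM xH hxM hformH hdot0 hcross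
    omega
  have hnonneg : ∀ i j, (0:ℝ) ≤ (G.induce H).adjMatrix ℝ i j := by
    intro i j
    simp only [SimpleGraph.adjMatrix_apply]
    split <;> norm_num
  refine ⟨M, A, H, ?_, ?_, ?_, ?_, hPM, hmin, rfl, ?_⟩
  · apply Set.eq_univ_of_forall
    intro v
    by_cases hM' : v ∈ M
    · exact Or.inl (Or.inl hM')
    · by_cases hA' : v ∈ A
      · exact Or.inl (Or.inr hA')
      · exact Or.inr ⟨hM', hA'⟩
  · exact Set.disjoint_left.mpr fun v hvM hvA => hvA.1 hvM
  · exact Set.disjoint_left.mpr fun v hvM hvH => hvH.1 hvM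
  · exact Set.disjoint_left.mpr fun v hvA hvH => hvH.2 hvA
  · intro x hx
    exact ⟨roots_neg_le_of_form (adj_herm' _) hnonneg hHform x hx,
      roots_le_of_form (adj_herm' _) hHform x hx⟩
end Herm5
end

section
/- Let G be a graph with eigenvalues λ_1 > 2 and λ_2, ..., λ_n ∈ [-2,2], and suppose λ_1 is irrational. Then the larger root τ of z + 1/z = λ_1 is a real algebraic integer greater than 1 all of whose conjugates lie in the closed unit disc apart from τ itself. -/
open scoped Classical

/-- `lam` lists the eigenvalues of the real matrix `A` in decreasing order. -/
def IsSortedSpectrum {m : ℕ} (A : Matrix (Fin m) (Fin m) ℝ) (lam : Fin m → ℝ) : Prop :=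
  Multiset.map lam Finset.univ.val = A.charpoly.roots ∧
    ∀ i j : Fin m, i ≤ j → lam j ≤ lam i

open Polynomial IntermediateField

/-- A complex root of `z^2 - c z + 1` with `c` real, `|c| ≤ 2`, lies in the closed unit disc. -/
lemma aux_abs_le_one {c : ℝ} (hc1 : -2 ≤ c) (hc2 : c ≤ 2) {z : ℂ}
    (hz : z ^ 2 - (c : ℂ) * z + 1 = 0) : ‖z‖ ≤ 1 := by
  have hre := congrArg Complex.re hz
  have him := congrArg Complex.im hz
  simp only [Complex.add_re, Complex.add_im, Complex.sub_re, Complex.sub_im,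
    Complex.mul_re, Complex.mul_im, Complex.one_re, Complex.one_im, Complex.zero_re,
    Complex.zero_im, Complex.ofReal_re, Complex.ofReal_im, pow_two] at hre him
  have key : z.re ^ 2 + z.im ^ 2 ≤ 1 := by
    rcases eq_or_ne z.im 0 with h0 | h0
    · rw [h0] at hre ⊢
      nlinarith [hre, sq_nonneg (z.re * z.re - 1),
        mul_nonneg (mul_nonneg (by linarith : (0:ℝ) ≤ 2 - c) (by linarith : (0:ℝ) ≤ c + 2))
          (sq_nonneg z.re)]
    · have hc' : c = 2 * z.re := by
        have h2 : z.im * (c - 2 * z.re) = 0 := by nlinarith [him]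
        rcases mul_eq_zero.1 h2 with h | h
        · exact absurd h h0
        · linarith
      nlinarith [hre, hc']
  have h1 := Complex.sq_norm z
  rw [Complex.normSq_apply] at h1
  nlinarith [norm_nonneg z, h1, key]

/-- A real number satisfying a monic quadratic with algebraic-integer coefficient is
an algebraic integer. -/
lemma aux_isIntegral {a t : ℝ} (ha : IsIntegral ℤ a) (ht : t ^ 2 - a * t + 1 = 0) :
    IsIntegral ℤ t := by
  have key : IsIntegral (integralClosure ℤ ℝ) t := by
    refine ⟨Polynomial.X ^ 2 -
      (Polynomial.C (⟨a, ha⟩ : integralClosure ℤ ℝ) * Polynomial.X - 1), ?_, ?_⟩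
    · apply Polynomial.monic_X_pow_sub
      refine lt_of_le_of_lt (Polynomial.degree_sub_le _ _) ?_
      have h1 : (Polynomial.C (⟨a, ha⟩ : integralClosure ℤ ℝ) * Polynomial.X).degree ≤ 1 :=
        Polynomial.degree_C_mul_X_le _
      have h2 : (1 : Polynomial (integralClosure ℤ ℝ)).degree ≤ 1 :=
        le_trans Polynomial.degree_one_le (by norm_num)
      refine lt_of_le_of_lt (max_le h1 h2) ?_
      decide
    · simp only [Polynomial.eval₂_sub, Polynomial.eval₂_pow, Polynomial.eval₂_X,
        Polynomial.eval₂_mul, Polynomial.eval₂_C, Polynomial.eval₂_one]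
      have : (algebraMap (integralClosure ℤ ℝ) ℝ) (⟨a, ha⟩ : integralClosure ℤ ℝ) = a := rfl
      rw [this]
      linarith [ht]
  exact isIntegral_trans t key

/-- Let `G` be a graph with eigenvalues `λ_1 > 2` and `λ_2, …, λ_n ∈ [-2,2]`, with `λ_1`
irrational, and let `τ > 1` be the larger root of `z + 1/z = λ_1`.  Then `τ` is a real
algebraic integer greater than `1` all of whose conjugates other than `τ` itself lie in
the closed unit disc. -/
theorem salem_graph_gives_salem_number (n : ℕ) (G : SimpleGraph (Fin (n + 1)))
    (lam : Fin (n + 1) → ℝ)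
    (hlam : IsSortedSpectrum (G.adjMatrix ℝ) lam)
    (h1 : 2 < lam 0)
    (hrest : ∀ i, i ≠ 0 → -2 ≤ lam i ∧ lam i ≤ 2)
    (hirr : Irrational (lam 0))
    (τ : ℝ) (hτ : 1 < τ) (heq : τ + τ⁻¹ = lam 0) :
    IsIntegral ℤ τ ∧ 1 < τ ∧
      ∀ z : ℂ, Polynomial.aeval z (minpoly ℚ τ) = 0 → z ≠ (τ : ℂ) →
        ‖z‖ ≤ 1 := by
  obtain ⟨hspec, -⟩ := hlam
  have hτ0 : (0 : ℝ) < τ := lt_trans one_pos hτ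
  have hτne : τ ≠ 0 := ne_of_gt hτ0
  set M : Matrix (Fin (n + 1)) (Fin (n + 1)) ℤ := G.adjMatrix ℤ with hM
  have hmap : M.map (Int.castRingHom ℝ) = G.adjMatrix ℝ := by
    ext i j
    simp [hM, Matrix.map_apply, SimpleGraph.adjMatrix_apply, apply_ite (Int.castRingHom ℝ)]
  have hcharR : (G.adjMatrix ℝ).charpoly = M.charpoly.map (Int.castRingHom ℝ) := by
    rw [← hmap, Matrix.charpoly_map]
  have hroot0 : (G.adjMatrix ℝ).charpoly.IsRoot (lam 0) := by
    apply Polynomial.isRoot_of_mem_roots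
    rw [← hspec]
    exact Multiset.mem_map_of_mem _ (Finset.mem_univ_val _)
  have hint1 : IsIntegral ℤ (lam 0) := by
    refine ⟨M.charpoly, M.charpoly_monic, ?_⟩
    rw [Polynomial.eval₂_eq_eval_map]
    have : M.charpoly.map (algebraMap ℤ ℝ) = M.charpoly.map (Int.castRingHom ℝ) := by
      congr 1
    rw [this, ← hcharR]
    exact hroot0
  have hquad : τ ^ 2 - lam 0 * τ + 1 = 0 := by
    have h' : τ * τ⁻¹ = 1 := mul_inv_cancel₀ hτne
    linear_combination τ * heq - h'
  have hτint : IsIntegral ℤ τ := aux_isIntegral hint1 hquad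
  refine ⟨hτint, hτ, ?_⟩
  intro z hz hzτ
  have hτQ : IsIntegral ℚ τ := hτint.tower_top
  have hz0 : z ≠ 0 := by
    intro h0
    apply minpoly.coeff_zero_ne_zero hτQ hτne
    rw [h0] at hz
    have h2 : (Polynomial.aeval (0 : ℂ)) (minpoly ℚ τ)
        = algebraMap ℚ ℂ ((minpoly ℚ τ).coeff 0) := by
      rw [Polynomial.aeval_def, Polynomial.eval₂_at_zero]
    rw [h2] at hz
    exact (map_eq_zero_iff _ (algebraMap ℚ ℂ).injective).1 hz
  -- embed ℚ⟮τ⟯ into ℂ sending τ to z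
  have hzroots : z ∈ (minpoly ℚ τ).aroots ℂ := by
    rw [Polynomial.mem_aroots]
    exact ⟨minpoly.ne_zero hτQ, hz⟩
  set ψ := (IntermediateField.algHomAdjoinIntegralEquiv ℚ hτQ).symm ⟨z, hzroots⟩ with hψ
  have hgen : ψ (IntermediateField.AdjoinSimple.gen ℚ τ) = z :=
    IntermediateField.algHomAdjoinIntegralEquiv_symm_apply_gen ℚ hτQ _
  set α := IntermediateField.AdjoinSimple.gen ℚ τ with hα
  set lamL : ℚ⟮τ⟯ := α + α⁻¹ with hlamL
  have hcoe : (algebraMap ℚ⟮τ⟯ ℝ) lamL = lam 0 := by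
    rw [hlamL, map_add, map_inv₀, IntermediateField.AdjoinSimple.algebraMap_gen]
    exact heq
  have hminpoly_eq : minpoly ℚ lamL = minpoly ℚ (lam 0) := by
    rw [← hcoe]
    exact (minpoly.algebraMap_eq (algebraMap ℚ⟮τ⟯ ℝ).injective lamL).symm
  have hw : (Polynomial.aeval (z + z⁻¹)) (minpoly ℚ (lam 0)) = 0 := by
    have hval : ψ lamL = z + z⁻¹ := by
      rw [hlamL, map_add, map_inv₀, hgen]
    rw [← hval, ← hminpoly_eq, Polynomial.aeval_algHom_apply, minpoly.aeval, map_zero]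
  -- z + z⁻¹ is a root of the (rational) characteristic polynomial
  set q : Polynomial ℚ := M.charpoly.map (Int.castRingHom ℚ) with hq
  have hq0 : Polynomial.aeval (lam 0) q = 0 := by
    rw [hq, Polynomial.aeval_def, Polynomial.eval₂_eq_eval_map, Polynomial.map_map]
    have : (algebraMap ℚ ℝ).comp (Int.castRingHom ℚ) = Int.castRingHom ℝ :=
      Subsingleton.elim _ _
    rw [this, ← hcharR]
    exact hroot0
  have hdvd : minpoly ℚ (lam 0) ∣ q := minpoly.dvd ℚ (lam 0) hq0
  have hwq : Polynomial.aeval (z + z⁻¹) q = 0 := by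
    obtain ⟨s, hs⟩ := hdvd
    rw [hs, map_mul, hw, zero_mul]
  have hsplits : ((G.adjMatrix ℝ).charpoly).Splits := by
    rw [Polynomial.splits_iff_card_roots, ← hspec]
    simp
  have hmemroots : z + z⁻¹ ∈ (((G.adjMatrix ℝ).charpoly).map (algebraMap ℝ ℂ)).roots := by
    rw [Polynomial.mem_roots']
    constructor
    · exact ((Matrix.charpoly_monic _).map _).ne_zero
    · have h2 : ((G.adjMatrix ℝ).charpoly).map (algebraMap ℝ ℂ) = q.map (algebraMap ℚ ℂ) := by
        rw [hcharR, hq, Polynomial.map_map, Polynomial.map_map]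
        congr 1
      rw [Polynomial.IsRoot, h2, Polynomial.eval_map, ← Polynomial.aeval_def]
      exact hwq
  rw [hsplits.roots_map, ← hspec, Multiset.map_map, Multiset.mem_map] at hmemroots
  obtain ⟨i, -, hi⟩ := hmemroots
  have hi' : z + z⁻¹ = ((lam i : ℝ) : ℂ) := by
    rw [← hi]; simp
  have hzz : z * z⁻¹ = 1 := mul_inv_cancel₀ hz0
  have hzq : z ^ 2 - ((lam i : ℝ) : ℂ) * z + 1 = 0 := by
    linear_combination z * hi' - hzz
  rcases eq_or_ne i 0 with rfl | hi0
  · -- z must equal τ⁻¹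
    have heqC : (τ : ℂ) + ((τ⁻¹ : ℝ) : ℂ) = ((lam 0 : ℝ) : ℂ) := by
      exact_mod_cast congrArg (fun x : ℝ => (x : ℂ)) heq
    have hττ : (τ : ℂ) * ((τ⁻¹ : ℝ) : ℂ) = 1 := by
      push_cast
      exact_mod_cast mul_inv_cancel₀ hτne
    have hfac : (z - (τ : ℂ)) * (z - ((τ⁻¹ : ℝ) : ℂ)) = 0 := by
      linear_combination hzq - z * heqC + hττ
    rcases mul_eq_zero.1 hfac with h | h
    · exact absurd (sub_eq_zero.1 h) hzτ
    · have : z = ((τ⁻¹ : ℝ) : ℂ) := sub_eq_zero.1 h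
      rw [this, Complex.norm_real, Real.norm_of_nonneg (inv_pos.2 hτ0).le]
      exact inv_le_one_of_one_le₀ hτ.le
  · obtain ⟨hge, hle⟩ := hrest i hi0
    exact aux_abs_le_one hge hle hzq
end

section
/- Let G be the graph obtained from K_n (n ≥ 3) by attaching a pendant path of positive length to each vertex in a subset S of size s with 2 ≤ s ≤ n. Then λ_2(G) ≤ 2. -/
open scoped Classical

/-- The graph obtained from the complete graph `K_n` by attaching, to each vertex `i`, a
pendant path with `len i` vertices (no path when `len i = 0`).  The path attached at `i`
has vertices `(i, 0), …, (i, len i - 1)`, consecutive ones adjacent, with `(i, 0)` joined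
to the clique vertex `i`. -/
def completeWithPendantPaths (n : ℕ) (len : Fin n → ℕ) :
    SimpleGraph (Fin n ⊕ Σ i : Fin n, Fin (len i)) where
  Adj x y :=
    match x, y with
    | Sum.inl i, Sum.inl j => i ≠ j
    | Sum.inl i, Sum.inr p => p.1 = i ∧ (p.2 : ℕ) = 0
    | Sum.inr p, Sum.inl i => p.1 = i ∧ (p.2 : ℕ) = 0
    | Sum.inr p, Sum.inr q =>
        p.1 = q.1 ∧ ((p.2 : ℕ) + 1 = (q.2 : ℕ) ∨ (q.2 : ℕ) + 1 = (p.2 : ℕ))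
  symm := by
    constructor
    rintro (i | p) (j | q) h
    · exact h.symm
    · exact h
    · exact h
    · exact ⟨h.1.symm, h.2.symm⟩
  loopless := by
    constructor
    rintro (i | p) h
    · exact h rfl
    · rcases h.2 with h2 | h2 <;> omega

open Polynomial in
open Finset Matrix in
lemma quad_decomp (n : ℕ) (len : Fin n → ℕ)
    (x : (Fin n ⊕ Σ i : Fin n, Fin (len i)) → ℝ) :
    x ⬝ᵥ ((completeWithPendantPaths n len).adjMatrix ℝ *ᵥ x)
      = (∑ i, ∑ j, if i ≠ j then x (Sum.inl i) * x (Sum.inl j) else 0)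
        + ∑ i, ((2 * ∑ t : Fin (len i),
              (if (t : ℕ) = 0 then x (Sum.inl i) * x (Sum.inr ⟨i, t⟩) else 0))
          + ∑ t : Fin (len i), ∑ u : Fin (len i),
              (if (t : ℕ) + 1 = (u : ℕ) ∨ (u : ℕ) + 1 = (t : ℕ)
                then x (Sum.inr ⟨i, t⟩) * x (Sum.inr ⟨i, u⟩) else 0)) := by
  classical
  set G := completeWithPendantPaths n len with hG
  have hQ : x ⬝ᵥ (G.adjMatrix ℝ *ᵥ x)
      = ∑ k, ∑ l, (if G.Adj k l then x k * x l else 0) := by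
    simp only [dotProduct, Matrix.mulVec, dotProduct,
      SimpleGraph.adjMatrix_apply, Finset.mul_sum, ite_mul, one_mul, zero_mul, mul_ite, mul_zero]
  have hsig : ∀ (f : (Σ i, Fin (len i)) → ℝ), ∑ p, f p = ∑ i, ∑ t, f ⟨i, t⟩ := fun f => by
    rw [← Finset.univ_sigma_univ, Finset.sum_sigma]
  have e_inl : ∀ i, (∑ l, if G.Adj (Sum.inl i) l then x (Sum.inl i) * x l else 0)
      = (∑ j, if i ≠ j then x (Sum.inl i) * x (Sum.inl j) else 0)
        + ∑ t : Fin (len i), (if (t : ℕ) = 0 then x (Sum.inl i) * x (Sum.inr ⟨i, t⟩) else 0) := by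
    intro i
    rw [Fintype.sum_sum_type]
    congr 1
    · refine Finset.sum_congr rfl fun j _ => if_congr Iff.rfl rfl rfl
    rw [hsig (fun p => if G.Adj (Sum.inl i) (Sum.inr p) then x (Sum.inl i) * x (Sum.inr p) else 0)]
    have h1 : ∀ j, (∑ t : Fin (len j),
        if G.Adj (Sum.inl i) (Sum.inr ⟨j, t⟩) then x (Sum.inl i) * x (Sum.inr ⟨j, t⟩) else 0)
        = if j = i then
            (∑ t : Fin (len j), if (t : ℕ) = 0 then x (Sum.inl i) * x (Sum.inr ⟨j, t⟩) else 0)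
          else 0 := by
      intro j
      by_cases h : j = i
      · subst h
        simp only [if_pos rfl]
        refine Finset.sum_congr rfl fun t _ => ?_
        have : G.Adj (Sum.inl j) (Sum.inr ⟨j, t⟩) ↔ (j = j ∧ (t : ℕ) = 0) := Iff.rfl
        rw [this]
        simp
      · rw [if_neg h]
        refine Finset.sum_eq_zero fun t _ => ?_
        have : G.Adj (Sum.inl i) (Sum.inr ⟨j, t⟩) ↔ (j = i ∧ (t : ℕ) = 0) := Iff.rfl
        rw [this, if_neg (by tauto)]
    rw [Finset.sum_congr rfl fun j _ => h1 j, Finset.sum_ite_eq' Finset.univ i, if_pos (Finset.mem_univ i)]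
  have e_inr : ∀ i (t : Fin (len i)),
      (∑ l, if G.Adj (Sum.inr ⟨i, t⟩) l then x (Sum.inr ⟨i, t⟩) * x l else 0)
      = (if (t : ℕ) = 0 then x (Sum.inr ⟨i, t⟩) * x (Sum.inl i) else 0)
        + ∑ u : Fin (len i), (if (t : ℕ) + 1 = (u : ℕ) ∨ (u : ℕ) + 1 = (t : ℕ)
            then x (Sum.inr ⟨i, t⟩) * x (Sum.inr ⟨i, u⟩) else 0) := by
    intro i t
    rw [Fintype.sum_sum_type]
    congr 1
    · have h1 : ∀ j, (if G.Adj (Sum.inr ⟨i, t⟩) (Sum.inl j) then x (Sum.inr ⟨i, t⟩) * x (Sum.inl j) else 0)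
          = if i = j then (if (t : ℕ) = 0 then x (Sum.inr ⟨i, t⟩) * x (Sum.inl j) else 0) else 0 := by
        intro j
        have h0 : G.Adj (Sum.inr ⟨i, t⟩) (Sum.inl j) ↔ (i = j ∧ (t : ℕ) = 0) := Iff.rfl
        rw [h0]
        by_cases h : i = j <;> simp [h]
      rw [Finset.sum_congr rfl fun j _ => h1 j, Finset.sum_ite_eq Finset.univ i, if_pos (Finset.mem_univ i)]
    · rw [hsig (fun q => if G.Adj (Sum.inr ⟨i, t⟩) (Sum.inr q) then x (Sum.inr ⟨i, t⟩) * x (Sum.inr q) else 0)]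
      have h1 : ∀ j, (∑ u : Fin (len j),
          if G.Adj (Sum.inr ⟨i, t⟩) (Sum.inr ⟨j, u⟩) then x (Sum.inr ⟨i, t⟩) * x (Sum.inr ⟨j, u⟩) else 0)
          = if i = j then (∑ u : Fin (len j), if G.Adj (Sum.inr ⟨i, t⟩) (Sum.inr ⟨j, u⟩)
              then x (Sum.inr ⟨i, t⟩) * x (Sum.inr ⟨j, u⟩) else 0) else 0 := by
        intro j
        by_cases h : i = j
        · rw [if_pos h]
        · rw [if_neg h]
          refine Finset.sum_eq_zero fun u _ => ?_
          have : G.Adj (Sum.inr ⟨i, t⟩) (Sum.inr ⟨j, u⟩) ↔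
              (i = j ∧ ((t : ℕ) + 1 = (u : ℕ) ∨ (u : ℕ) + 1 = (t : ℕ))) := Iff.rfl
          rw [this, if_neg (by tauto)]
      rw [Finset.sum_congr rfl fun j _ => h1 j, Finset.sum_ite_eq Finset.univ i, if_pos (Finset.mem_univ i)]
      refine Finset.sum_congr rfl fun u _ => ?_
      have : G.Adj (Sum.inr ⟨i, t⟩) (Sum.inr ⟨i, u⟩) ↔
          (i = i ∧ ((t : ℕ) + 1 = (u : ℕ) ∨ (u : ℕ) + 1 = (t : ℕ))) := Iff.rfl
      rw [this]
      simp
  rw [hQ, Fintype.sum_sum_type,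
    hsig (fun p => ∑ l, if G.Adj (Sum.inr p) l then x (Sum.inr p) * x l else 0)]
  rw [Finset.sum_congr rfl fun i _ => e_inl i,
    Finset.sum_congr rfl fun i _ => Finset.sum_congr rfl fun t (_ : t ∈ Finset.univ) => e_inr i t]
  have e_swap : ∀ i, ∑ t : Fin (len i),
      ((if (t : ℕ) = 0 then x (Sum.inr ⟨i, t⟩) * x (Sum.inl i) else 0)
        + ∑ u : Fin (len i), (if (t : ℕ) + 1 = (u : ℕ) ∨ (u : ℕ) + 1 = (t : ℕ)
            then x (Sum.inr ⟨i, t⟩) * x (Sum.inr ⟨i, u⟩) else 0))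
      = (∑ t : Fin (len i), if (t : ℕ) = 0 then x (Sum.inl i) * x (Sum.inr ⟨i, t⟩) else 0)
        + ∑ t : Fin (len i), ∑ u : Fin (len i), (if (t : ℕ) + 1 = (u : ℕ) ∨ (u : ℕ) + 1 = (t : ℕ)
            then x (Sum.inr ⟨i, t⟩) * x (Sum.inr ⟨i, u⟩) else 0) := by
    intro i
    rw [Finset.sum_add_distrib]
    congr 1
    refine Finset.sum_congr rfl fun t _ => ?_
    rw [mul_comm]
  rw [Finset.sum_congr rfl fun i _ => e_swap i]
  rw [← Finset.sum_add_distrib]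
  rw [Finset.sum_congr rfl (fun i _ => by ring :
    ∀ i ∈ Finset.univ,
      ((∑ j, if i ≠ j then x (Sum.inl i) * x (Sum.inl j) else 0)
        + ∑ t : Fin (len i), (if (t : ℕ) = 0 then x (Sum.inl i) * x (Sum.inr ⟨i, t⟩) else 0))
      + ((∑ t : Fin (len i), if (t : ℕ) = 0 then x (Sum.inl i) * x (Sum.inr ⟨i, t⟩) else 0)
        + ∑ t : Fin (len i), ∑ u : Fin (len i), (if (t : ℕ) + 1 = (u : ℕ) ∨ (u : ℕ) + 1 = (t : ℕ)
            then x (Sum.inr ⟨i, t⟩) * x (Sum.inr ⟨i, u⟩) else 0))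
      = (∑ j, if i ≠ j then x (Sum.inl i) * x (Sum.inl j) else 0)
        + ((2 * ∑ t : Fin (len i),
              (if (t : ℕ) = 0 then x (Sum.inl i) * x (Sum.inr ⟨i, t⟩) else 0))
          + ∑ t : Fin (len i), ∑ u : Fin (len i),
              (if (t : ℕ) + 1 = (u : ℕ) ∨ (u : ℕ) + 1 = (t : ℕ)
                then x (Sum.inr ⟨i, t⟩) * x (Sum.inr ⟨i, u⟩) else 0)))]
  rw [Finset.sum_add_distrib]

lemma chain_bound (z : ℕ → ℝ) : ∀ m : ℕ,
    ∑ t ∈ Finset.range m, 2 * (z t * z (t + 1))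
      ≤ 2 * ∑ t ∈ Finset.range (m + 1), z t ^ 2 - z 0 ^ 2 - z m ^ 2 := by
  intro m
  induction m with
  | zero => simp; nlinarith [sq_nonneg (z 0)]
  | succ k ih =>
      rw [Finset.sum_range_succ, Finset.sum_range_succ (fun t => z t ^ 2) (k + 1)]
      nlinarith [sq_nonneg (z k - z (k + 1))]

lemma pathQuad (m : ℕ) (c : ℝ) (z : ℕ → ℝ) :
    2 * (if 0 ∈ Finset.range m then c * z 0 else 0)
      + ∑ t ∈ Finset.range m, ∑ u ∈ Finset.range m,
          (if t + 1 = u ∨ u + 1 = t then z t * z u else 0)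
    ≤ c ^ 2 + 2 * ∑ t ∈ Finset.range m, z t ^ 2 := by
  rcases Nat.eq_zero_or_pos m with hm | hm
  · subst hm; simp; nlinarith [sq_nonneg c]
  have hsplit : ∀ t u : ℕ, (if t + 1 = u ∨ u + 1 = t then z t * z u else 0)
      = (if t + 1 = u then z t * z u else 0) + (if u + 1 = t then z t * z u else 0) := by
    intro t u
    by_cases h1 : t + 1 = u <;> by_cases h2 : u + 1 = t <;> simp [h1, h2] <;> omega
  have hds : ∑ t ∈ Finset.range m, ∑ u ∈ Finset.range m,
      (if t + 1 = u ∨ u + 1 = t then z t * z u else 0)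
      = ∑ t ∈ Finset.range (m - 1), 2 * (z t * z (t + 1)) := by
    simp_rw [hsplit, Finset.sum_add_distrib]
    have e1 : ∑ t ∈ Finset.range m, ∑ u ∈ Finset.range m,
        (if t + 1 = u then z t * z u else 0)
        = ∑ t ∈ Finset.range m, (if t + 1 ∈ Finset.range m then z t * z (t + 1) else 0) := by
      refine Finset.sum_congr rfl fun t _ => ?_
      exact Finset.sum_ite_eq (Finset.range m) (t + 1) (fun u => z t * z u)
    have e2 : ∑ t ∈ Finset.range m, ∑ u ∈ Finset.range m,
        (if u + 1 = t then z t * z u else 0)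
        = ∑ u ∈ Finset.range m, (if u + 1 ∈ Finset.range m then z (u + 1) * z u else 0) := by
      rw [Finset.sum_comm]
      refine Finset.sum_congr rfl fun u _ => ?_
      exact Finset.sum_ite_eq (Finset.range m) (u + 1) (fun t => z t * z u)
    have e3 : ∀ w : ℕ → ℝ, ∑ t ∈ Finset.range m, (if t + 1 ∈ Finset.range m then w t else 0)
        = ∑ t ∈ Finset.range (m - 1), w t := by
      intro w
      rw [← Finset.sum_filter]
      congr 1
      ext t
      simp only [Finset.mem_filter, Finset.mem_range]
      omega
    rw [e1, e2, e3, e3]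
    rw [← Finset.sum_add_distrib]
    refine Finset.sum_congr rfl fun t _ => by ring
  rw [hds, if_pos (Finset.mem_range.mpr hm)]
  have hc := chain_bound z (m - 1)
  have hm1 : m - 1 + 1 = m := by omega
  rw [hm1] at hc
  nlinarith [sq_nonneg (c - z 0), sq_nonneg (z (m - 1))]

open Finset Matrix in
lemma quad_bound (n : ℕ) (len : Fin n → ℕ)
    (x : (Fin n ⊕ Σ i : Fin n, Fin (len i)) → ℝ)
    (hx : ∑ k, x (Sum.inl k) = 0) :
    x ⬝ᵥ ((completeWithPendantPaths n len).adjMatrix ℝ *ᵥ x) ≤ 2 * (x ⬝ᵥ x) := by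
  classical
  have hsig : ∀ (f : (Σ i, Fin (len i)) → ℝ), ∑ p, f p = ∑ i, ∑ t, f ⟨i, t⟩ := fun f => by
    rw [← Finset.univ_sigma_univ, Finset.sum_sigma]
  rw [quad_decomp]
  have hS1 : (∑ i, ∑ j, if i ≠ j then x (Sum.inl i) * x (Sum.inl j) else 0)
      = - ∑ i, x (Sum.inl i) ^ 2 := by
    have h1 : ∀ i : Fin n, (∑ j, if i ≠ j then x (Sum.inl i) * x (Sum.inl j) else 0)
        = - (x (Sum.inl i) ^ 2) := by
      intro i
      have h2 : ∀ j : Fin n, (if i ≠ j then x (Sum.inl i) * x (Sum.inl j) else 0)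
          = x (Sum.inl i) * x (Sum.inl j)
            - (if i = j then x (Sum.inl i) * x (Sum.inl j) else 0) := by
        intro j; by_cases h : i = j <;> simp [h]
      rw [Finset.sum_congr rfl fun j _ => h2 j, Finset.sum_sub_distrib, ← Finset.mul_sum, hx,
        Finset.sum_ite_eq Finset.univ i, if_pos (Finset.mem_univ i)]
      ring
    rw [Finset.sum_congr rfl fun i _ => h1 i, Finset.sum_neg_distrib]
  have hper : ∀ i : Fin n,
      (2 * ∑ t : Fin (len i),
          (if (t : ℕ) = 0 then x (Sum.inl i) * x (Sum.inr ⟨i, t⟩) else 0))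
        + ∑ t : Fin (len i), ∑ u : Fin (len i),
            (if (t : ℕ) + 1 = (u : ℕ) ∨ (u : ℕ) + 1 = (t : ℕ)
              then x (Sum.inr ⟨i, t⟩) * x (Sum.inr ⟨i, u⟩) else 0)
      ≤ x (Sum.inl i) ^ 2 + 2 * ∑ t : Fin (len i), x (Sum.inr ⟨i, t⟩) ^ 2 := by
    intro i
    set z : ℕ → ℝ := fun s => if h : s < len i then x (Sum.inr ⟨i, ⟨s, h⟩⟩) else 0 with hz
    have hz' : ∀ t : Fin (len i), z (t : ℕ) = x (Sum.inr ⟨i, t⟩) := by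
      intro t; simp [hz, t.isLt]
    have e1 : (∑ t : Fin (len i),
        (if (t : ℕ) = 0 then x (Sum.inl i) * x (Sum.inr ⟨i, t⟩) else 0))
        = if 0 ∈ Finset.range (len i) then x (Sum.inl i) * z 0 else 0 := by
      rw [Finset.sum_congr rfl fun t _ => by rw [← hz' t]]
      rw [Fin.sum_univ_eq_sum_range (fun s => if s = 0 then x (Sum.inl i) * z s else 0) (len i)]
      exact Finset.sum_ite_eq' (Finset.range (len i)) 0 (fun s => x (Sum.inl i) * z s)
    have e2 : (∑ t : Fin (len i), ∑ u : Fin (len i),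
        (if (t : ℕ) + 1 = (u : ℕ) ∨ (u : ℕ) + 1 = (t : ℕ)
          then x (Sum.inr ⟨i, t⟩) * x (Sum.inr ⟨i, u⟩) else 0))
        = ∑ t ∈ Finset.range (len i), ∑ u ∈ Finset.range (len i),
            (if t + 1 = u ∨ u + 1 = t then z t * z u else 0) := by
      rw [Finset.sum_congr rfl fun t _ => Finset.sum_congr rfl fun u _ => by
        rw [← hz' t, ← hz' u]]
      have step1 : ∀ t : Fin (len i),
          (∑ u : Fin (len i),
            (if (t : ℕ) + 1 = (u : ℕ) ∨ (u : ℕ) + 1 = (t : ℕ) then z (t : ℕ) * z (u : ℕ) else 0))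
          = ∑ u ∈ Finset.range (len i),
              (if (t : ℕ) + 1 = u ∨ u + 1 = (t : ℕ) then z (t : ℕ) * z u else 0) := fun t =>
        Fin.sum_univ_eq_sum_range
          (fun u => if (t : ℕ) + 1 = u ∨ u + 1 = (t : ℕ) then z (t : ℕ) * z u else 0) (len i)
      rw [Finset.sum_congr rfl fun t _ => step1 t]
      exact Fin.sum_univ_eq_sum_range (fun t => ∑ u ∈ Finset.range (len i),
        (if t + 1 = u ∨ u + 1 = t then z t * z u else 0)) (len i)
    have e3 : (∑ t : Fin (len i), x (Sum.inr ⟨i, t⟩) ^ 2)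
        = ∑ t ∈ Finset.range (len i), z t ^ 2 := by
      rw [Finset.sum_congr rfl fun t _ => by rw [← hz' t]]
      exact Fin.sum_univ_eq_sum_range (fun s => z s ^ 2) (len i)
    rw [e1, e2, e3]
    exact pathQuad (len i) (x (Sum.inl i)) z
  have hdot : x ⬝ᵥ x = ∑ i, x (Sum.inl i) ^ 2
      + ∑ i, ∑ t : Fin (len i), x (Sum.inr ⟨i, t⟩) ^ 2 := by
    simp only [dotProduct]
    rw [Fintype.sum_sum_type, hsig (fun p => x (Sum.inr p) * x (Sum.inr p))]
    congr 1
    · exact Finset.sum_congr rfl fun i _ => (pow_two _).symm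
    · exact Finset.sum_congr rfl fun i _ => Finset.sum_congr rfl fun t _ => (pow_two _).symm
  have hT := Finset.sum_le_sum fun i (_ : i ∈ Finset.univ) => hper i
  have hsplit2 : (∑ i, (x (Sum.inl i) ^ 2 + 2 * ∑ t : Fin (len i), x (Sum.inr ⟨i, t⟩) ^ 2))
      = ∑ i, x (Sum.inl i) ^ 2 + 2 * ∑ i, ∑ t : Fin (len i), x (Sum.inr ⟨i, t⟩) ^ 2 := by
    rw [Finset.sum_add_distrib, Finset.mul_sum]
  rw [hsplit2] at hT
  have hP : (0:ℝ) ≤ ∑ i, x (Sum.inl i) ^ 2 :=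
    Finset.sum_nonneg fun i _ => sq_nonneg _
  rw [hS1, hdot]
  linarith


open Polynomial Matrix Finset in
/-- Let `G` be obtained from `K_n` (`n ≥ 3`) by attaching a pendant path of positive
length to each vertex in a subset `S` of size `s` with `2 ≤ s ≤ n` (so `len i > 0` exactly
for `i ∈ S`).  Then `λ_2(G) ≤ 2`: at most one eigenvalue of `G` (with multiplicity)
exceeds `2`. -/
theorem completeWithPendantPaths_second_eigenvalue (n : ℕ) (hn : 3 ≤ n)
    (len : Fin n → ℕ) (S : Finset (Fin n)) (hS : 2 ≤ S.card)
    (hlen : ∀ i, i ∈ S ↔ 0 < len i) :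
    ((((completeWithPendantPaths n len).adjMatrix ℝ).charpoly.roots).filter
        (fun x => 2 < x)).card ≤ 1 := by
  classical
  set G := completeWithPendantPaths n len with hGdef
  set A := G.adjMatrix ℝ with hAdef
  have hA : A.IsHermitian := by
    rw [Matrix.IsHermitian, Matrix.conjTranspose_eq_transpose_of_trivial]
    exact SimpleGraph.isSymm_adjMatrix G
  -- charpoly of conjugation
  have hconj : ∀ U D : Matrix (Fin n ⊕ Σ i : Fin n, Fin (len i))
      (Fin n ⊕ Σ i : Fin n, Fin (len i)) ℝ, U * star U = 1 → star U * U = 1 →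
      (U * D * star U).charpoly = D.charpoly := by
    intro U D h1 h2
    have hmap : ∀ P Q : Matrix (Fin n ⊕ Σ i : Fin n, Fin (len i))
        (Fin n ⊕ Σ i : Fin n, Fin (len i)) ℝ, (C.mapMatrix (P * Q) : Matrix _ _ ℝ[X])
        = C.mapMatrix P * C.mapMatrix Q := fun P Q => by simp
    have hone : (C.mapMatrix (1 : Matrix (Fin n ⊕ Σ i : Fin n, Fin (len i)) _ ℝ)
        : Matrix _ _ ℝ[X]) = 1 := by simp
    have key : charmatrix (U * D * star U)
        = C.mapMatrix U * charmatrix D * C.mapMatrix (star U) := by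
      rw [charmatrix, charmatrix, Matrix.mul_sub, Matrix.sub_mul]
      congr 1
      · rw [← (Matrix.scalar_commute X (fun r => Commute.all X r) (C.mapMatrix U)).eq, mul_assoc,
          ← hmap, h1, hone, mul_one]
      · rw [← hmap, ← hmap]
    rw [Matrix.charpoly, key, det_mul, det_mul, Matrix.charpoly, mul_comm, ← mul_assoc,
      ← det_mul, ← hmap, h2, hone, det_one, one_mul]
  have hdiag : ∀ d : (Fin n ⊕ Σ i : Fin n, Fin (len i)) → ℝ,
      (Matrix.diagonal d).charpoly = ∏ i, (X - C (d i)) := by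
    intro d
    have h : charmatrix (Matrix.diagonal d) = Matrix.diagonal (fun i => X - C (d i)) := by
      ext i j
      by_cases h : i = j
      · subst h; simp
      · simp [charmatrix_apply_ne _ _ _ h, Matrix.diagonal_apply_ne _ h]
    rw [Matrix.charpoly, h, det_diagonal]
  have hroots : A.charpoly.roots = Finset.univ.val.map hA.eigenvalues := by
    have h1 := Matrix.mem_unitaryGroup_iff.mp (hA.eigenvectorUnitary).2
    have h2 := Matrix.mem_unitaryGroup_iff'.mp (hA.eigenvectorUnitary).2
    have hsp := hA.spectral_theorem
    have h3 : A.charpoly = ∏ i, (X - C (hA.eigenvalues i)) := by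
      rw [congrArg Matrix.charpoly hsp, Unitary.conjStarAlgAut_apply, hconj _ _ h1 h2]
      have h4 : (RCLike.ofReal ∘ hA.eigenvalues : _ → ℝ) = hA.eigenvalues := by
        funext i; simp
      rw [h4, hdiag]
    rw [h3]
    have h5 : ∏ i, (X - C (hA.eigenvalues i))
        = ((Finset.univ.val.map hA.eigenvalues).map fun a => X - C a).prod := by
      rw [Multiset.map_map]; rfl
    rw [h5, Polynomial.roots_multiset_prod_X_sub_C]
  by_contra hcon
  push_neg at hcon
  rw [hroots] at hcon
  -- extract two distinct indices with eigenvalue > 2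
  rw [Multiset.filter_map, Multiset.card_map] at hcon
  have hcon2 : 1 < (Finset.univ.filter (fun i => 2 < hA.eigenvalues i)).card := by
    simpa [Finset.card, Finset.filter] using hcon
  obtain ⟨i, hi, j, hj, hij⟩ := Finset.one_lt_card.mp hcon2
  have h2i : 2 < hA.eigenvalues i := (Finset.mem_filter.mp hi).2
  have h2j : 2 < hA.eigenvalues j := (Finset.mem_filter.mp hj).2
  -- eigenvectors
  set vi : (Fin n ⊕ Σ i : Fin n, Fin (len i)) → ℝ := ⇑(hA.eigenvectorBasis i) with hvi
  set vj : (Fin n ⊕ Σ i : Fin n, Fin (len i)) → ℝ := ⇑(hA.eigenvectorBasis j) with hvj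
  have hAvi : A *ᵥ vi = hA.eigenvalues i • vi := hA.mulVec_eigenvectorBasis i
  have hAvj : A *ᵥ vj = hA.eigenvalues j • vj := hA.mulVec_eigenvectorBasis j
  have hon := orthonormal_iff_ite.mp hA.eigenvectorBasis.orthonormal
  have hinner : ∀ u v : EuclideanSpace ℝ (Fin n ⊕ Σ i : Fin n, Fin (len i)),
      (inner ℝ u v : ℝ) = (⇑u) ⬝ᵥ (⇑v) := by
    intro u v
    simp [PiLp.inner_apply, dotProduct, RCLike.inner_apply, mul_comm]
  have hvivi : vi ⬝ᵥ vi = 1 := by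
    have := hon i i; rw [hinner] at this; simpa using this
  have hvjvj : vj ⬝ᵥ vj = 1 := by
    have := hon j j; rw [hinner] at this; simpa using this
  have hvivj : vi ⬝ᵥ vj = 0 := by
    have := hon i j; rw [hinner] at this; simpa [hij] using this
  have hvjvi : vj ⬝ᵥ vi = 0 := by rw [dotProduct_comm]; exact hvivj
  -- choose coefficients
  set p : ℝ := ∑ k, vi (Sum.inl k) with hp
  set q : ℝ := ∑ k, vj (Sum.inl k) with hq
  obtain ⟨a, b, hab0, habne⟩ : ∃ a b : ℝ, a * p + b * q = 0 ∧ 0 < a ^ 2 + b ^ 2 := by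
    by_cases hp0 : p = 0
    · exact ⟨1, 0, by rw [hp0]; ring, by norm_num⟩
    · refine ⟨q, -p, by ring, ?_⟩
      have : 0 < p ^ 2 := pow_two_pos_of_ne_zero hp0
      nlinarith [sq_nonneg q]
  set x : (Fin n ⊕ Σ i : Fin n, Fin (len i)) → ℝ := fun k => a * vi k + b * vj k with hx
  have hxc : ∑ k, x (Sum.inl k) = 0 := by
    simp only [hx]
    rw [Finset.sum_add_distrib, ← Finset.mul_sum, ← Finset.mul_sum, ← hp, ← hq]
    exact hab0
  have hxx : x ⬝ᵥ x = a ^ 2 + b ^ 2 := by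
    have hxe : x = a • vi + b • vj := by funext k; simp [hx]
    rw [hxe, add_dotProduct, smul_dotProduct, smul_dotProduct,
      dotProduct_add, dotProduct_add, dotProduct_smul,
      dotProduct_smul, dotProduct_smul, dotProduct_smul,
      hvivi, hvivj, hvjvi, hvjvj]
    simp only [smul_eq_mul]
    ring
  have hAx : A *ᵥ x = (hA.eigenvalues i * a) • vi + (hA.eigenvalues j * b) • vj := by
    have hxe : x = a • vi + b • vj := by funext k; simp [hx]
    rw [hxe, Matrix.mulVec_add, Matrix.mulVec_smul, Matrix.mulVec_smul, hAvi, hAvj,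
      smul_smul, smul_smul, mul_comm a, mul_comm b]
  have hQ : x ⬝ᵥ (A *ᵥ x) = hA.eigenvalues i * a ^ 2 + hA.eigenvalues j * b ^ 2 := by
    have hxe : x = a • vi + b • vj := by funext k; simp [hx]
    rw [hAx, hxe, add_dotProduct, smul_dotProduct, smul_dotProduct,
      dotProduct_add, dotProduct_add, dotProduct_smul,
      dotProduct_smul, dotProduct_smul, dotProduct_smul,
      hvivi, hvivj, hvjvi, hvjvj]
    simp only [smul_eq_mul]
    ring
  have hbound := quad_bound n len x hxc
  rw [hQ, hxx] at hbound
  -- contradiction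
  have habcases : a ≠ 0 ∨ b ≠ 0 := by
    by_contra hc
    push_neg at hc
    rw [hc.1, hc.2] at habne
    norm_num at habne
  have hlt : 2 * (a ^ 2 + b ^ 2) < hA.eigenvalues i * a ^ 2 + hA.eigenvalues j * b ^ 2 := by
    rcases habcases with ha | hb
    · have h1 := mul_lt_mul_of_pos_right h2i (pow_two_pos_of_ne_zero ha)
      have h2 := mul_le_mul_of_nonneg_right h2j.le (sq_nonneg b)
      nlinarith
    · have h1 := mul_lt_mul_of_pos_right h2j (pow_two_pos_of_ne_zero hb)
      have h2 := mul_le_mul_of_nonneg_right h2i.le (sq_nonneg a)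
      nlinarith
  linarith
end
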